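/- Let s : ℕ → K with s(0) ≠ 0, and define the operator T := Σ_{k≥0} (s(k)/k_ψ!)·∂_ψ^k on K[X]. Then T is a K-linear automorphism of K[X], i.e. T is bijective. -/
import Mathlib

open Polynomial Finset

lemma aux_D_deg {K : Type*} [Field K]
    (nψ : ℕ → K)
    (D : Polynomial K →ₗ[K] Polynomial K)
    (hD : ∀ n : ℕ, D (X ^ (n + 1)) = nψ (n + 1) • X ^ n)
    (hD1 : D 1 = 0) (p : Polynomial K) :
    (D p).degree < (p.natDegree : WithBot ℕ) := by
  conv_lhs => rw [p.as_sum_range]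
  rw [map_sum]
  refine lt_of_le_of_lt (degree_sum_le _ _) ?_
  rw [Finset.sup_lt_iff (by exact_mod_cast WithBot.bot_lt_coe _)]
  intro i hi
  rw [Finset.mem_range] at hi
  have h1 : D ((monomial i) (p.coeff i)) = p.coeff i • D (X ^ i) := by
    rw [← smul_X_eq_monomial, map_smul]
  rw [h1]
  refine lt_of_le_of_lt (degree_smul_le _ _) ?_
  cases i with
  | zero =>
    simp only [pow_zero, hD1, degree_zero]
    exact_mod_cast WithBot.bot_lt_coe _
  | succ j =>
    rw [hD j]
    refine lt_of_le_of_lt (degree_smul_le _ _) ?_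
    refine lt_of_le_of_lt (degree_X_pow_le j) ?_
    exact_mod_cast Nat.lt_of_succ_lt_succ hi

lemma aux_Dk_deg {K : Type*} [Field K]
    (nψ : ℕ → K)
    (D : Polynomial K →ₗ[K] Polynomial K)
    (hD : ∀ n : ℕ, D (X ^ (n + 1)) = nψ (n + 1) • X ^ n)
    (hD1 : D 1 = 0) (k : ℕ) (hk : 1 ≤ k) (p : Polynomial K) :
    ((D ^ k) p).degree < (p.natDegree : WithBot ℕ) := by
  induction k with
  | zero => omega
  | succ m ih =>
    rcases Nat.eq_or_lt_of_le hk with h | h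
    · rw [← h]
      simpa using aux_D_deg nψ D hD hD1 p
    · have hm : 1 ≤ m := by omega
      have h1 := aux_D_deg nψ D hD hD1 ((D ^ m) p)
      have h2 : (D ^ (m + 1)) p = D ((D ^ m) p) := by
        rw [pow_succ']; rfl
      rw [h2]
      refine lt_of_lt_of_le h1 ?_
      have h3 : ((D ^ m) p).natDegree ≤ p.natDegree := by
        have := ih hm
        exact natDegree_le_iff_degree_le.2 (le_of_lt (lt_of_lt_of_le this (by exact_mod_cast le_refl _)))
      exact_mod_cast h3

lemma aux_Dk_deg_le {K : Type*} [Field K]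
    (nψ : ℕ → K)
    (D : Polynomial K →ₗ[K] Polynomial K)
    (hD : ∀ n : ℕ, D (X ^ (n + 1)) = nψ (n + 1) • X ^ n)
    (hD1 : D 1 = 0) (k : ℕ) (p : Polynomial K) :
    ((D ^ k) p).degree ≤ p.degree := by
  cases k with
  | zero => simp
  | succ m =>
    by_cases hp : p = 0
    · simp [hp]
    · refine le_of_lt (lt_of_lt_of_le (aux_Dk_deg nψ D hD hD1 (m+1) (by omega) p) ?_)
      rw [degree_eq_natDegree hp]

/-- Let `s : ℕ → K` with `s 0 ≠ 0` and define
`T := Σ_{k≥0} (s k / k_ψ!) ∂_ψ^k` on `K[X]`.  Then `T` is a `K`-linear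
automorphism of `K[X]`, i.e. `T` is bijective. -/
theorem stmt1 {K : Type*} [Field K] [CharZero K]
    (ψ : ℕ → K) (hψ : ∀ n, ψ n ≠ 0)
    (nψ : ℕ → K) (hnψ0 : nψ 0 = 0)
    (hnψ : ∀ n : ℕ, 1 ≤ n → nψ n = ψ (n - 1) / ψ n)
    (hadm : ∀ n : ℕ, 1 ≤ n → nψ n ≠ 0)
    (nψfact : ℕ → K) (hfact0 : nψfact 0 = 1)
    (hfact : ∀ n : ℕ, nψfact (n + 1) = nψ (n + 1) * nψfact n)
    (D : Polynomial K →ₗ[K] Polynomial K)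
    (hD : ∀ n : ℕ, D (X ^ (n + 1)) = nψ (n + 1) • X ^ n)
    (hD1 : D 1 = 0)
    (s : ℕ → K) (hs0 : s 0 ≠ 0)
    (T : Polynomial K →ₗ[K] Polynomial K)
    (hT : ∀ p : Polynomial K,
      T p = ∑ k ∈ Finset.range (p.natDegree + 1),
        (s k / nψfact k) • ((D ^ k) p)) :
    Function.Bijective T := by
  have hcoeff : ∀ p : Polynomial K, (T p).coeff p.natDegree = s 0 * p.leadingCoeff := by
    intro p
    rw [hT p, finset_sum_coeff]
    rw [Finset.sum_eq_single 0]
    · rw [pow_zero, coeff_smul, hfact0, div_one, Module.End.one_apply]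
      rfl
    · intro k hk hk0
      have h1 : ((D ^ k) p).degree < (p.natDegree : WithBot ℕ) :=
        aux_Dk_deg nψ D hD hD1 k (Nat.one_le_iff_ne_zero.2 hk0) p
      rw [coeff_smul, coeff_eq_zero_of_degree_lt h1, smul_zero]
    · intro h
      simp at h
  have hdegle : ∀ p : Polynomial K, (T p).degree ≤ p.degree := by
    intro p
    rw [hT p]
    refine le_trans (degree_sum_le _ _) ?_
    rw [Finset.sup_le_iff]
    intro k hk
    exact le_trans (degree_smul_le _ _) (aux_Dk_deg_le nψ D hD hD1 k p)
  have hdeg : ∀ p : Polynomial K, p ≠ 0 → (T p).degree = p.degree := by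
    intro p hp
    refine le_antisymm (hdegle p) ?_
    have h1 : (T p).coeff p.natDegree ≠ 0 := by
      rw [hcoeff p]
      exact mul_ne_zero hs0 (leadingCoeff_ne_zero.2 hp)
    rw [degree_eq_natDegree hp]
    exact le_degree_of_ne_zero h1
  have hlc : ∀ p : Polynomial K, p ≠ 0 → (T p).leadingCoeff = s 0 * p.leadingCoeff := by
    intro p hp
    have hTp : (T p).natDegree = p.natDegree := by
      have := hdeg p hp
      rw [degree_eq_natDegree hp] at this
      exact natDegree_eq_of_degree_eq_some this
    rw [leadingCoeff, hTp, hcoeff p]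
  have step : ∀ q : Polynomial K, q ≠ 0 →
      ∃ p₁ : Polynomial K, (q - T p₁).degree < q.degree := by
    intro q hq
    set c : K := (s 0)⁻¹ * q.leadingCoeff with hc
    have hcne : c ≠ 0 := mul_ne_zero (inv_ne_zero hs0) (leadingCoeff_ne_zero.2 hq)
    set p₁ : Polynomial K := monomial q.natDegree c with hp₁
    have hp₁ne : p₁ ≠ 0 := by
      rw [hp₁]
      simpa using hcne
    have hdp₁ : p₁.degree = q.degree := by
      rw [hp₁, degree_monomial _ hcne, degree_eq_natDegree hq]
    have hlcp₁ : p₁.leadingCoeff = c := by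
      rw [hp₁, leadingCoeff_monomial]
    refine ⟨p₁, degree_sub_lt ?_ hq ?_⟩
    · rw [hdeg p₁ hp₁ne, hdp₁]
    · rw [hlc p₁ hp₁ne, hlcp₁, hc, ← mul_assoc, mul_inv_cancel₀ hs0, one_mul]
  constructor
  · rw [injective_iff_map_eq_zero]
    intro p hp
    by_contra h
    have := hdeg p h
    rw [hp, degree_zero] at this
    exact h (degree_eq_bot.1 this.symm)
  · have key : ∀ n : ℕ, ∀ q : Polynomial K, q.natDegree ≤ n → ∃ p, T p = q := by
      intro n
      induction n with
      | zero =>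
        intro q hq
        by_cases hq0 : q = 0
        · exact ⟨0, by simp [hq0]⟩
        · obtain ⟨p₁, hp₁⟩ := step q hq0
          have hdq : q.degree = 0 := by
            rw [degree_eq_natDegree hq0]
            exact_mod_cast Nat.le_zero.1 hq
          rw [hdq] at hp₁
          have h0 : q - T p₁ = 0 := by
            by_contra h
            exact absurd hp₁ (not_lt.2 (zero_le_degree_iff.2 h))
          exact ⟨p₁, (sub_eq_zero.1 h0).symm⟩
      | succ m ih =>
        intro q hq
        by_cases hq0 : q = 0
        · exact ⟨0, by simp [hq0]⟩
        · obtain ⟨p₁, hp₁⟩ := step q hq0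
          by_cases hr : q - T p₁ = 0
          · exact ⟨p₁, (sub_eq_zero.1 hr).symm⟩
          · have hlt : (q - T p₁).natDegree < q.natDegree :=
              natDegree_lt_natDegree hr hp₁
            obtain ⟨p₂, hp₂⟩ := ih (q - T p₁) (by omega)
            exact ⟨p₁ + p₂, by rw [map_add, hp₂]; ring⟩
    intro q
    exact key q.natDegree q le_rfl
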